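/- Let γ* be a minimizer of γ ↦ μ·γ − λ·V(γ, r) over γ ≥ 0, and for ν ∈ ℝ^S define q_i(ν) = λ·π(i) − Σ_{a∈anc(i), a≠i} ν_a·π(i)/π(a). A vector ν that is feasible for SimplerFluid is optimal for SimplerFluid if and only if the following three conditions hold: (C-1) Σ_{i∈S} ν_i = μ whenever γ* > 0; (C-2) for every state i with c(i) + V^f(γ*, i) > γ*, one has ν_i = q_i(ν); (C-3) for every state i with c(i) + V^f(γ*, i) < γ*, one has ν_i = 0. -/

import Mathlib

open scoped Classical
open Finset

/-- A finite tree-structured Markov chain: a finite state space partitioned into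
levels `0, …, L-1`, a root `r` at level `0`, a parent map `pa` (with `pa r = r` by
convention), and transition probabilities `p i ∈ (0,1]` of being reached from the
parent, with `p r = 1`. -/
structure TreeMC (S : Type*) [Fintype S] [DecidableEq S] where
  /-- the number of levels -/
  L : ℕ
  /-- the root -/
  r : S
  /-- the parent map (with `pa r = r` by convention) -/
  pa : S → S
  /-- the level of each state -/
  level : S → ℕ
  /-- the probability of being reached from the parent -/
  p : S → ℝ
  level_lt : ∀ i, level i < L
  level_r : level r = 0
  root_unique : ∀ i, level i = 0 → i = r
  pa_r : pa r = r
  level_pa : ∀ i, i ≠ r → level (pa i) + 1 = level i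
  p_pos : ∀ i, 0 < p i
  p_le_one : ∀ i, p i ≤ 1
  p_r : p r = 1

namespace TreeMC

variable {S : Type*} [Fintype S] [DecidableEq S] (M : TreeMC S)

/-- The ancestors of `i`: states on the path from the root to `i` (both included). -/
noncomputable def anc (i : S) : Finset S :=
  Finset.univ.filter fun a => ∃ n : ℕ, M.pa^[n] i = a

/-- The subtree of `i`: all states having `i` as an ancestor. -/
noncomputable def subt (i : S) : Finset S :=
  Finset.univ.filter fun k => i ∈ M.anc k

/-- The subtree of a set of states. -/
noncomputable def subF (X : Finset S) : Finset S :=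
  Finset.univ.filter fun k => ∃ i ∈ X, k ∈ M.subt i

/-- `π i`: the probability that a job passes through state `i`. -/
noncomputable def pi (i : S) : ℝ :=
  ∏ a ∈ M.anc i, M.p a

/-- The children of `i`. -/
noncomputable def child (i : S) : Finset S :=
  Finset.univ.filter fun k => k ≠ M.r ∧ M.pa k = i

/-- `T` is the top set of `X`: a subset of `X` whose subtree covers `X` and in which
no state lies in the subtree of a different state. -/
def IsTopSet (X T : Finset S) : Prop :=
  T ⊆ X ∧ X ⊆ M.subF T ∧ ∀ i ∈ T, ∀ k ∈ T, i ≠ k → k ∉ M.subt i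

/-- Expected future cost conditional on being in state `a`. -/
noncomputable def cf (c : S → ℝ) (a : S) : ℝ :=
  ∑ i ∈ M.subt a, c i * M.pi i / M.pi a

/-- `V` is the ski-rental value function:
`V γ i = min (γ, c i + Σ_{k ∈ child i} p k · V γ k)`. -/
def IsSkiValue (c : S → ℝ) (V : ℝ → S → ℝ) : Prop :=
  ∀ γ : ℝ, ∀ i : S, V γ i = min γ (c i + ∑ k ∈ M.child i, M.p k * V γ k)

/-- Expected future cost-to-go `V^f`. -/
noncomputable def Vf (V : ℝ → S → ℝ) (γ : ℝ) (i : S) : ℝ :=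
  ∑ k ∈ M.child i, M.p k * V γ k

/-- The candidate optimal state duals `β*(γ)`. -/
noncomputable def betaStar (c : S → ℝ) (V : ℝ → S → ℝ) (γ : ℝ) (i : S) : ℝ :=
  max 0 (c i + M.Vf V γ i - γ)

/-- Feasibility for the dual program `D*(γ)`. -/
def DualFeasible (c : S → ℝ) (γ : ℝ) (β : S → ℝ) : Prop :=
  (∀ i, 0 ≤ β i) ∧ ∀ a, M.cf c a ≤ γ + ∑ i ∈ M.subt a, β i * M.pi i / M.pi a

/-- Feasibility for the fluid LP (OriginalFluid). -/
def OrigFeasible (lam mu : ℝ) (q ν : S → ℝ) : Prop :=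
  (∀ i, 0 ≤ q i) ∧ (∀ i, 0 ≤ ν i) ∧ q M.r = lam ∧
    (∀ i, i ≠ M.r → q i = (q (M.pa i) - ν (M.pa i)) * M.p i) ∧
    (∀ i, ν i ≤ q i) ∧ ∑ i : S, ν i ≤ mu

/-- Feasibility for the fluid LP (SimplerFluid). -/
def SimpFeasible (lam mu : ℝ) (ν : S → ℝ) : Prop :=
  (∀ i, 0 ≤ ν i) ∧ (∀ i, ∑ a ∈ M.anc i, ν a * M.pi i / M.pi a ≤ lam * M.pi i) ∧
    ∑ i : S, ν i ≤ mu

end TreeMC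


namespace TreeMC

variable {S : Type*} [Fintype S] [DecidableEq S] (M : TreeMC S)

lemma level_pa_le (i : S) : M.level (M.pa i) ≤ M.level i := by
  by_cases h : i = M.r
  · subst h; rw [M.pa_r]
  · have := M.level_pa i h; omega

lemma level_iter_le (n : ℕ) (i : S) : M.level (M.pa^[n] i) ≤ M.level i := by
  induction n with
  | zero => simp
  | succ n ih =>
      rw [Function.iterate_succ_apply']
      exact le_trans (M.level_pa_le _) ih

lemma level_iter_eq (n : ℕ) (i : S) (h : n ≤ M.level i) :
    M.level (M.pa^[n] i) = M.level i - n := by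
  induction n with
  | zero => simp
  | succ n ih =>
      have h1 : n ≤ M.level i := by omega
      have h2 : M.level (M.pa^[n] i) = M.level i - n := ih h1
      have hne : M.pa^[n] i ≠ M.r := by
        intro he
        rw [he, M.level_r] at h2; omega
      have := M.level_pa _ hne
      rw [Function.iterate_succ_apply']
      omega

lemma iter_level_root (i : S) : M.pa^[M.level i] i = M.r := by
  apply M.root_unique
  have := M.level_iter_eq (M.level i) i le_rfl
  omega

lemma iter_root (n : ℕ) (i : S) (h : M.level i ≤ n) : M.pa^[n] i = M.r := by
  have : M.pa^[n] i = M.pa^[n - M.level i] (M.pa^[M.level i] i) := by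
    rw [← Function.iterate_add_apply]; congr 1; omega
  rw [this, M.iter_level_root, Function.iterate_fixed M.pa_r]

lemma mem_anc {a i : S} : a ∈ M.anc i ↔ ∃ n : ℕ, M.pa^[n] i = a := by
  simp [anc]

lemma self_mem_anc (i : S) : i ∈ M.anc i := M.mem_anc.2 ⟨0, rfl⟩

lemma root_mem_anc (i : S) : M.r ∈ M.anc i := M.mem_anc.2 ⟨M.level i, M.iter_level_root i⟩

lemma pa_mem_anc (i : S) : M.pa i ∈ M.anc i := M.mem_anc.2 ⟨1, rfl⟩

lemma anc_level_le {a i : S} (h : a ∈ M.anc i) : M.level a ≤ M.level i := by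
  obtain ⟨n, rfl⟩ := M.mem_anc.1 h
  exact M.level_iter_le n i

lemma anc_iterate {a i : S} (h : a ∈ M.anc i) :
    M.pa^[M.level i - M.level a] i = a := by
  obtain ⟨n, rfl⟩ := M.mem_anc.1 h
  rcases le_or_gt n (M.level i) with hn | hn
  · have := M.level_iter_eq n i hn
    have : M.level i - M.level (M.pa^[n] i) = n := by omega
    rw [this]
  · have h1 : M.pa^[n] i = M.r := M.iter_root n i (by omega)
    rw [h1, M.level_r]
    simpa using M.iter_level_root i

lemma anc_trans {a b j : S} (ha : a ∈ M.anc j) (hb : b ∈ M.anc a) : b ∈ M.anc j := by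
  obtain ⟨n, rfl⟩ := M.mem_anc.1 ha
  obtain ⟨m, rfl⟩ := M.mem_anc.1 hb
  exact M.mem_anc.2 ⟨m + n, (Function.iterate_add_apply _ m n j)⟩

lemma anc_root : M.anc M.r = {M.r} := by
  ext a
  simp only [mem_anc, Finset.mem_singleton]
  constructor
  · rintro ⟨n, rfl⟩; rw [Function.iterate_fixed M.pa_r]
  · rintro rfl; exact ⟨0, rfl⟩

lemma eq_of_anc_level {a b j : S} (ha : a ∈ M.anc j) (hb : b ∈ M.anc j)
    (h : M.level a = M.level b) : a = b := by
  have h1 := M.anc_iterate ha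
  have h2 := M.anc_iterate hb
  rw [← h1, ← h2, h]

lemma anc_of_ne {a i : S} (h : a ∈ M.anc i) (hne : a ≠ i) : a ∈ M.anc (M.pa i) := by
  obtain ⟨n, rfl⟩ := M.mem_anc.1 h
  cases n with
  | zero => simp at hne
  | succ n => exact M.mem_anc.2 ⟨n, by rw [← Function.iterate_succ_apply]⟩

lemma not_self_mem_anc_pa {i : S} (h : i ≠ M.r) : i ∉ M.anc (M.pa i) := by
  intro hmem
  have h1 := M.anc_level_le hmem
  have := M.level_pa i h
  omega

lemma anc_insert {i : S} (h : i ≠ M.r) : M.anc i = insert i (M.anc (M.pa i)) := by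
  ext a
  simp only [Finset.mem_insert]
  constructor
  · intro ha
    rcases eq_or_ne a i with rfl | hne
    · exact Or.inl rfl
    · exact Or.inr (M.anc_of_ne ha hne)
  · rintro (rfl | ha)
    · exact M.self_mem_anc a
    · exact M.anc_trans (M.pa_mem_anc i) ha

lemma pi_root : M.pi M.r = 1 := by
  rw [pi, anc_root, Finset.prod_singleton, M.p_r]

lemma pi_of_ne {i : S} (h : i ≠ M.r) : M.pi i = M.p i * M.pi (M.pa i) := by
  rw [pi, pi, M.anc_insert h, Finset.prod_insert (M.not_self_mem_anc_pa h)]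

lemma pi_pos (i : S) : 0 < M.pi i :=
  Finset.prod_pos fun a _ => M.p_pos a

lemma pi_ne_zero (i : S) : M.pi i ≠ 0 := (M.pi_pos i).ne'

lemma mem_child {k i : S} : k ∈ M.child i ↔ k ≠ M.r ∧ M.pa k = i := by simp [child]

lemma level_child {k i : S} (h : k ∈ M.child i) : M.level k = M.level i + 1 := by
  obtain ⟨h1, h2⟩ := M.mem_child.1 h
  have := M.level_pa k h1
  rw [h2] at this; omega

lemma pi_child {k i : S} (h : k ∈ M.child i) : M.pi k = M.p k * M.pi i := by
  obtain ⟨h1, h2⟩ := M.mem_child.1 h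
  rw [M.pi_of_ne h1, h2]

lemma mem_subt {j i : S} : j ∈ M.subt i ↔ i ∈ M.anc j := by simp [subt]

lemma self_mem_subt (i : S) : i ∈ M.subt i := M.mem_subt.2 (M.self_mem_anc i)

lemma subt_root : M.subt M.r = Finset.univ := by
  ext j; simp [mem_subt, M.root_mem_anc j]

lemma level_le_of_mem_subt {j i : S} (h : j ∈ M.subt i) : M.level i ≤ M.level j :=
  M.anc_level_le (M.mem_subt.1 h)

lemma not_mem_subt_child {k i : S} (h : k ∈ M.child i) : i ∉ M.subt k := by
  intro hmem
  have := M.level_le_of_mem_subt hmem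
  have := M.level_child h
  omega

lemma subt_disjoint {k k' i : S} (hk : k ∈ M.child i) (hk' : k' ∈ M.child i)
    (hne : k ≠ k') : Disjoint (M.subt k) (M.subt k') := by
  rw [Finset.disjoint_left]
  intro j hj hj'
  exact hne (M.eq_of_anc_level (M.mem_subt.1 hj) (M.mem_subt.1 hj')
    (by rw [M.level_child hk, M.level_child hk']))

lemma subt_eq (i : S) :
    M.subt i = insert i ((M.child i).biUnion fun k => M.subt k) := by
  ext j
  simp only [Finset.mem_insert, Finset.mem_biUnion]
  constructor
  · intro hj
    rcases eq_or_ne j i with rfl | hne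
    · exact Or.inl rfl
    · have hanc : i ∈ M.anc j := M.mem_subt.1 hj
      have hlt : M.level i < M.level j := by
        rcases lt_or_eq_of_le (M.anc_level_le hanc) with h | h
        · exact h
        · exact absurd (M.eq_of_anc_level hanc (M.self_mem_anc j) h) (Ne.symm hne)
      refine Or.inr ⟨M.pa^[M.level j - M.level i - 1] j, ?_, ?_⟩
      · rw [mem_child]
        constructor
        · intro he
          have := M.level_iter_eq (M.level j - M.level i - 1) j (by omega)
          rw [he, M.level_r] at this
          omega
        · have h5 : M.pa^[M.level j - M.level i - 1 + 1] j
              = M.pa (M.pa^[M.level j - M.level i - 1] j) :=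
            Function.iterate_succ_apply' _ _ _
          have h6 : M.level j - M.level i - 1 + 1 = M.level j - M.level i := by omega
          rw [← h5, h6, M.anc_iterate hanc]
      · exact M.mem_subt.2 (M.mem_anc.2 ⟨_, rfl⟩)
  · rintro (rfl | ⟨k, hk, hjk⟩)
    · exact M.self_mem_subt j
    · have h1 : k ∈ M.anc j := M.mem_subt.1 hjk
      have h2 : i ∈ M.anc k := by
        obtain ⟨-, hpk⟩ := M.mem_child.1 hk
        rw [← hpk]; exact M.pa_mem_anc k
      exact M.mem_subt.2 (M.anc_trans h1 h2)

lemma sum_subt (i : S) (f : S → ℝ) :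
    ∑ j ∈ M.subt i, f j = f i + ∑ k ∈ M.child i, ∑ j ∈ M.subt k, f j := by
  rw [M.subt_eq i, Finset.sum_insert, Finset.sum_biUnion]
  · intro k hk k' hk' hne
    exact M.subt_disjoint hk hk' hne
  · intro hmem
    simp only [Finset.mem_biUnion] at hmem
    obtain ⟨k, hk, hik⟩ := hmem
    exact M.not_mem_subt_child hk hik

end TreeMC

namespace TreeMC

variable {S : Type*} [Fintype S] [DecidableEq S] (M : TreeMC S)

lemma cf_rec (c : S → ℝ) (a : S) :
    M.cf c a = c a + ∑ k ∈ M.child a, M.p k * M.cf c k := by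
  rw [cf, M.sum_subt a]
  congr 1
  · rw [mul_div_assoc, div_self (M.pi_ne_zero a), mul_one]
  · apply Finset.sum_congr rfl
    intro k hk
    rw [cf, Finset.mul_sum]
    apply Finset.sum_congr rfl
    intro j _
    rw [M.pi_child hk]
    have h1 := M.pi_ne_zero a
    have h2 := (M.p_pos k).ne'
    field_simp

lemma V_eq {c : S → ℝ} {V : ℝ → S → ℝ} (hV : M.IsSkiValue c V) (γ : ℝ) (i : S) :
    V γ i = min γ (c i + M.Vf V γ i) := hV γ i

lemma V_le_gamma {c : S → ℝ} {V : ℝ → S → ℝ} (hV : M.IsSkiValue c V) (γ : ℝ) (i : S) :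
    V γ i ≤ γ := by
  rw [M.V_eq hV]; exact min_le_left _ _

lemma betaStar_nonneg (c : S → ℝ) (V : ℝ → S → ℝ) (γ : ℝ) (i : S) :
    0 ≤ M.betaStar c V γ i := le_max_left _ _

theorem sum_subt_betaStar (c : S → ℝ) (V : ℝ → S → ℝ) (hV : M.IsSkiValue c V)
    (γ : ℝ) (a : S) :
    ∑ j ∈ M.subt a, M.betaStar c V γ j * M.pi j / M.pi a = M.cf c a - V γ a := by
  have key : ∀ k ∈ M.child a,
      ∑ j ∈ M.subt k, M.betaStar c V γ j * M.pi j / M.pi a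
        = M.p k * (M.cf c k - V γ k) := by
    intro k hk
    have ih := sum_subt_betaStar c V hV γ k
    rw [← ih, Finset.mul_sum]
    apply Finset.sum_congr rfl
    intro j _
    rw [M.pi_child hk]
    have h1 := M.pi_ne_zero a
    have h2 := (M.p_pos k).ne'
    field_simp
  rw [M.sum_subt a, Finset.sum_congr rfl key]
  have hb : M.betaStar c V γ a * M.pi a / M.pi a = M.betaStar c V γ a := by
    rw [mul_div_assoc, div_self (M.pi_ne_zero a), mul_one]
  rw [hb, M.cf_rec c a, M.V_eq hV γ a]
  rw [betaStar, Vf]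
  have hsplit : ∑ k ∈ M.child a, M.p k * (M.cf c k - V γ k)
      = ∑ k ∈ M.child a, M.p k * M.cf c k - ∑ k ∈ M.child a, M.p k * V γ k := by
    rw [← Finset.sum_sub_distrib]
    exact Finset.sum_congr rfl fun k _ => by ring
  rw [hsplit]
  rcases le_total (c a + ∑ k ∈ M.child a, M.p k * V γ k) γ with h | h
  · rw [max_eq_left (by linarith), min_eq_right h]; ring
  · rw [max_eq_right (by linarith), min_eq_left h]; ring
termination_by M.L - M.level a
decreasing_by
  have := M.level_child hk
  have := M.level_lt k
  omega

lemma sum_subt_swap (f : S → S → ℝ) :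
    ∑ a : S, ∑ j ∈ M.subt a, f a j = ∑ j : S, ∑ a ∈ M.anc j, f a j := by
  have h1 : ∀ a : S, ∑ j ∈ M.subt a, f a j
      = ∑ j : S, if a ∈ M.anc j then f a j else 0 := by
    intro a
    rw [subt, Finset.sum_filter]
  have h2 : ∀ j : S, ∑ a ∈ M.anc j, f a j
      = ∑ a : S, if a ∈ M.anc j then f a j else 0 := by
    intro j
    rw [Finset.sum_ite_mem, Finset.univ_inter]
  simp only [h1, h2]
  exact Finset.sum_comm

lemma objective_eq (c : S → ℝ) (V : ℝ → S → ℝ) (hV : M.IsSkiValue c V)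
    (γ : ℝ) (ν : S → ℝ) :
    ∑ a : S, ν a * M.cf c a
      = ∑ a : S, ν a * V γ a
        + ∑ j : S, M.betaStar c V γ j * ∑ a ∈ M.anc j, ν a * M.pi j / M.pi a := by
  have h1 : ∀ a : S, ν a * M.cf c a
      = ν a * V γ a + ∑ j ∈ M.subt a, ν a * (M.betaStar c V γ j * M.pi j / M.pi a) := by
    intro a
    rw [← Finset.mul_sum, M.sum_subt_betaStar c V hV γ a]
    ring
  rw [Finset.sum_congr rfl fun a _ => h1 a, Finset.sum_add_distrib]
  congr 1
  rw [M.sum_subt_swap]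
  apply Finset.sum_congr rfl
  intro j _
  rw [Finset.mul_sum]
  apply Finset.sum_congr rfl
  intro a _
  ring

lemma gap_eq (c : S → ℝ) (V : ℝ → S → ℝ) (hV : M.IsSkiValue c V)
    (lam mu γ : ℝ) (ν : S → ℝ) :
    mu * γ + lam * ∑ j : S, M.betaStar c V γ j * M.pi j - ∑ a : S, ν a * M.cf c a
      = γ * (mu - ∑ i : S, ν i)
        + ∑ j : S, M.betaStar c V γ j *
            (lam * M.pi j - ∑ a ∈ M.anc j, ν a * M.pi j / M.pi a)
        + ∑ a : S, ν a * (γ - V γ a) := by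
  rw [M.objective_eq c V hV γ ν]
  have e1 : ∑ j : S, M.betaStar c V γ j *
      (lam * M.pi j - ∑ a ∈ M.anc j, ν a * M.pi j / M.pi a)
      = lam * ∑ j : S, M.betaStar c V γ j * M.pi j
        - ∑ j : S, M.betaStar c V γ j * ∑ a ∈ M.anc j, ν a * M.pi j / M.pi a := by
    rw [Finset.mul_sum, ← Finset.sum_sub_distrib]
    exact Finset.sum_congr rfl fun j _ => by ring
  have e2 : ∑ a : S, ν a * (γ - V γ a)
      = γ * ∑ a : S, ν a - ∑ a : S, ν a * V γ a := by
    rw [Finset.mul_sum, ← Finset.sum_sub_distrib]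
    exact Finset.sum_congr rfl fun a _ => by ring
  rw [e1, e2]
  ring

end TreeMC

namespace TreeMC

variable {S : Type*} [Fintype S] [DecidableEq S] (M : TreeMC S)

lemma erase_form (lam : ℝ) (ν : S → ℝ) (i : S) :
    (∑ a ∈ M.anc i, ν a * M.pi i / M.pi a = lam * M.pi i)
    ↔ ν i = lam * M.pi i - ∑ a ∈ (M.anc i).erase i, ν a * M.pi i / M.pi a := by
  have h := Finset.sum_erase_add (M.anc i) (fun a => ν a * M.pi i / M.pi a)
    (M.self_mem_anc i)
  have hii : ν i * M.pi i / M.pi i = ν i := by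
    rw [mul_div_assoc, div_self (M.pi_ne_zero i), mul_one]
  rw [← h, hii]
  constructor <;> intro hh <;> linarith

lemma weak_duality (c : S → ℝ) (V : ℝ → S → ℝ) (hV : M.IsSkiValue c V)
    (lam mu γ : ℝ) (hγ0 : 0 ≤ γ) (ν : S → ℝ) (hν : M.SimpFeasible lam mu ν) :
    ∑ a : S, ν a * M.cf c a
      ≤ mu * γ + lam * ∑ j : S, M.betaStar c V γ j * M.pi j := by
  have hgap := M.gap_eq c V hV lam mu γ ν
  obtain ⟨hν0, hνs, hνsum⟩ := hν
  have T1 : 0 ≤ γ * (mu - ∑ i : S, ν i) := mul_nonneg hγ0 (by linarith)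
  have T2 : 0 ≤ ∑ j : S, M.betaStar c V γ j *
      (lam * M.pi j - ∑ a ∈ M.anc j, ν a * M.pi j / M.pi a) :=
    Finset.sum_nonneg fun j _ => mul_nonneg (M.betaStar_nonneg c V γ j)
      (by have := hνs j; linarith)
  have T3 : 0 ≤ ∑ a : S, ν a * (γ - V γ a) :=
    Finset.sum_nonneg fun a _ => mul_nonneg (hν0 a)
      (by have := M.V_le_gamma hV γ a; linarith)
  linarith

lemma opt_char (c : S → ℝ) (V : ℝ → S → ℝ) (hV : M.IsSkiValue c V)
    (lam mu γ : ℝ) (hγ0 : 0 ≤ γ) (ν : S → ℝ) (hν : M.SimpFeasible lam mu ν) :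
    (∑ a : S, ν a * M.cf c a
        = mu * γ + lam * ∑ j : S, M.betaStar c V γ j * M.pi j)
      ↔ ((0 < γ → ∑ i : S, ν i = mu)
        ∧ (∀ i : S, γ < c i + M.Vf V γ i →
            ∑ a ∈ M.anc i, ν a * M.pi i / M.pi a = lam * M.pi i)
        ∧ (∀ i : S, c i + M.Vf V γ i < γ → ν i = 0)) := by
  obtain ⟨hν0, hνs, hνsum⟩ := hν
  have hb : ∀ j : S, 0 ≤ M.betaStar c V γ j *
      (lam * M.pi j - ∑ a ∈ M.anc j, ν a * M.pi j / M.pi a) := fun j =>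
    mul_nonneg (M.betaStar_nonneg c V γ j) (by have := hνs j; linarith)
  have hn : ∀ a : S, 0 ≤ ν a * (γ - V γ a) := fun a =>
    mul_nonneg (hν0 a) (by have := M.V_le_gamma hV γ a; linarith)
  have hgap := M.gap_eq c V hV lam mu γ ν
  have T1 : 0 ≤ γ * (mu - ∑ i : S, ν i) := mul_nonneg hγ0 (by linarith)
  have T2 : 0 ≤ ∑ j : S, M.betaStar c V γ j *
      (lam * M.pi j - ∑ a ∈ M.anc j, ν a * M.pi j / M.pi a) :=
    Finset.sum_nonneg fun j _ => hb j
  have T3 : 0 ≤ ∑ a : S, ν a * (γ - V γ a) :=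
    Finset.sum_nonneg fun a _ => hn a
  constructor
  · intro heq
    have h1 : γ * (mu - ∑ i : S, ν i) = 0 := by linarith
    have h2 : ∑ j : S, M.betaStar c V γ j *
        (lam * M.pi j - ∑ a ∈ M.anc j, ν a * M.pi j / M.pi a) = 0 := by linarith
    have h3 : ∑ a : S, ν a * (γ - V γ a) = 0 := by linarith
    have h2' := (Finset.sum_eq_zero_iff_of_nonneg fun j _ => hb j).1 h2
    have h3' := (Finset.sum_eq_zero_iff_of_nonneg fun a _ => hn a).1 h3
    refine ⟨?_, ?_, ?_⟩
    · intro hγpos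
      rcases mul_eq_zero.1 h1 with h | h
      · exact absurd h (ne_of_gt hγpos)
      · linarith
    · intro i hi
      have hβ : M.betaStar c V γ i = c i + M.Vf V γ i - γ :=
        max_eq_right (by linarith)
      have := h2' i (Finset.mem_univ i)
      rcases mul_eq_zero.1 this with h | h
      · rw [hβ] at h; linarith
      · linarith
    · intro i hi
      have hVi : V γ i = c i + M.Vf V γ i := by
        rw [M.V_eq hV γ i]; exact min_eq_right (by linarith)
      have := h3' i (Finset.mem_univ i)
      rcases mul_eq_zero.1 this with h | h
      · exact h
      · rw [hVi] at h; linarith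
  · rintro ⟨C1, C2, C3⟩
    have h1 : γ * (mu - ∑ i : S, ν i) = 0 := by
      rcases hγ0.eq_or_lt with h | h
      · rw [← h]; ring
      · rw [C1 h]; ring
    have h2 : ∑ j : S, M.betaStar c V γ j *
        (lam * M.pi j - ∑ a ∈ M.anc j, ν a * M.pi j / M.pi a) = 0 := by
      apply Finset.sum_eq_zero
      intro j _
      rcases lt_or_ge γ (c j + M.Vf V γ j) with h | h
      · rw [C2 j h]; ring
      · rw [betaStar, max_eq_left (by linarith)]; ring
    have h3 : ∑ a : S, ν a * (γ - V γ a) = 0 := by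
      apply Finset.sum_eq_zero
      intro a _
      rcases lt_or_ge (c a + M.Vf V γ a) γ with h | h
      · rw [C3 a h]; ring
      · have : V γ a = γ := by rw [M.V_eq hV γ a]; exact min_eq_left h
        rw [this]; ring
    linarith

end TreeMC

namespace TreeMC

variable {S : Type*} [Fintype S] [DecidableEq S] (M : TreeMC S)

noncomputable def dlo (c : S → ℝ) (V : ℝ → S → ℝ) (γ : ℝ) (i : S) : ℝ :=
  if γ < c i + M.Vf V γ i then 1
  else if c i + M.Vf V γ i < γ then
    ∑ k ∈ (M.child i).attach, M.p k.1 * dlo c V γ k.1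
  else min 1 (∑ k ∈ (M.child i).attach, M.p k.1 * dlo c V γ k.1)
termination_by M.L - M.level i
decreasing_by
  all_goals (have := M.level_child k.2; have := M.level_lt k.1; omega)

noncomputable def dhi (c : S → ℝ) (V : ℝ → S → ℝ) (γ : ℝ) (i : S) : ℝ :=
  if γ < c i + M.Vf V γ i then 1
  else if c i + M.Vf V γ i < γ then
    ∑ k ∈ (M.child i).attach, M.p k.1 * dhi c V γ k.1
  else max 1 (∑ k ∈ (M.child i).attach, M.p k.1 * dhi c V γ k.1)
termination_by M.L - M.level i
decreasing_by
  all_goals (have := M.level_child k.2; have := M.level_lt k.1; omega)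

lemma dlo_def (c : S → ℝ) (V : ℝ → S → ℝ) (γ : ℝ) (i : S) :
    M.dlo c V γ i =
      if γ < c i + M.Vf V γ i then 1
      else if c i + M.Vf V γ i < γ then
        ∑ k ∈ M.child i, M.p k * M.dlo c V γ k
      else min 1 (∑ k ∈ M.child i, M.p k * M.dlo c V γ k) := by
  rw [dlo, ← Finset.sum_attach (M.child i) (fun k => M.p k * M.dlo c V γ k)]

lemma dhi_def (c : S → ℝ) (V : ℝ → S → ℝ) (γ : ℝ) (i : S) :
    M.dhi c V γ i =
      if γ < c i + M.Vf V γ i then 1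
      else if c i + M.Vf V γ i < γ then
        ∑ k ∈ M.child i, M.p k * M.dhi c V γ k
      else max 1 (∑ k ∈ M.child i, M.p k * M.dhi c V γ k) := by
  rw [dhi, ← Finset.sum_attach (M.child i) (fun k => M.p k * M.dhi c V γ k)]

theorem dlo_nonneg (c : S → ℝ) (V : ℝ → S → ℝ) (γ : ℝ) (i : S) :
    0 ≤ M.dlo c V γ i := by
  have hA : 0 ≤ ∑ k ∈ M.child i, M.p k * M.dlo c V γ k :=
    Finset.sum_nonneg fun k hk =>
      mul_nonneg (M.p_pos k).le (dlo_nonneg c V γ k)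
  rw [M.dlo_def]
  split_ifs with h1 h2
  · norm_num
  · exact hA
  · exact le_min (by norm_num) hA
termination_by M.L - M.level i
decreasing_by
  have := M.level_child hk; have := M.level_lt k; omega

theorem dhi_nonneg (c : S → ℝ) (V : ℝ → S → ℝ) (γ : ℝ) (i : S) :
    0 ≤ M.dhi c V γ i := by
  have hA : 0 ≤ ∑ k ∈ M.child i, M.p k * M.dhi c V γ k :=
    Finset.sum_nonneg fun k hk =>
      mul_nonneg (M.p_pos k).le (dhi_nonneg c V γ k)
  rw [M.dhi_def]
  split_ifs with h1 h2
  · norm_num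
  · exact hA
  · exact le_max_of_le_left (by norm_num)
termination_by M.L - M.level i
decreasing_by
  have := M.level_child hk; have := M.level_lt k; omega

theorem dlo_le_dhi (c : S → ℝ) (V : ℝ → S → ℝ) (γ : ℝ) (i : S) :
    M.dlo c V γ i ≤ M.dhi c V γ i := by
  have hAB : ∑ k ∈ M.child i, M.p k * M.dlo c V γ k
      ≤ ∑ k ∈ M.child i, M.p k * M.dhi c V γ k :=
    Finset.sum_le_sum fun k hk =>
      mul_le_mul_of_nonneg_left (dlo_le_dhi c V γ k) (M.p_pos k).le
  rw [M.dlo_def, M.dhi_def]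
  split_ifs with h1 h2
  · exact le_rfl
  · exact hAB
  · exact le_trans (min_le_left _ _) (le_max_left _ _)
termination_by M.L - M.level i
decreasing_by
  have := M.level_child hk; have := M.level_lt k; omega

theorem pert_up (c : S → ℝ) (V : ℝ → S → ℝ) (hV : M.IsSkiValue c V)
    (γ ε : ℝ) (hε : 0 < ε)
    (P1 : ∀ i : S, γ < c i + M.Vf V γ i → ε ≤ c i + M.Vf V γ i - γ)
    (P3 : ∀ i : S, c i + M.Vf V γ i < γ →
      ε * ∑ k ∈ M.child i, M.p k * M.dlo c V γ k ≤ (γ - (c i + M.Vf V γ i)) + ε)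
    (i : S) : V γ i + ε * M.dlo c V γ i ≤ V (γ + ε) i := by
  have hA : 0 ≤ ∑ k ∈ M.child i, M.p k * M.dlo c V γ k :=
    Finset.sum_nonneg fun k hk =>
      mul_nonneg (M.p_pos k).le (M.dlo_nonneg c V γ k)
  have hVf : M.Vf V γ i + ε * (∑ k ∈ M.child i, M.p k * M.dlo c V γ k)
      ≤ M.Vf V (γ + ε) i := by
    rw [Vf, Vf, Finset.mul_sum, ← Finset.sum_add_distrib]
    apply Finset.sum_le_sum
    intro k hk
    have ih := pert_up c V hV γ ε hε P1 P3 k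
    have hp := (M.p_pos k).le
    nlinarith [mul_le_mul_of_nonneg_left ih hp]
  rw [M.V_eq hV γ i, M.V_eq hV (γ + ε) i, M.dlo_def]
  rcases lt_trichotomy γ (c i + M.Vf V γ i) with h | h | h
  · rw [if_pos h, min_eq_left h.le]
    have h1 := P1 i h
    have hεA := mul_nonneg hε.le hA
    apply le_min
    · linarith
    · linarith
  · rw [if_neg (by rw [← h]; exact lt_irrefl γ), if_neg (by rw [← h]; exact lt_irrefl γ)]
    rw [← h, min_self]
    apply le_min
    · have hm : min 1 (∑ k ∈ M.child i, M.p k * M.dlo c V γ k) ≤ 1 := min_le_left _ _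
      nlinarith
    · have hm : min 1 (∑ k ∈ M.child i, M.p k * M.dlo c V γ k)
          ≤ ∑ k ∈ M.child i, M.p k * M.dlo c V γ k := min_le_right _ _
      nlinarith
  · rw [if_neg (by linarith), if_pos h, min_eq_right (by linarith)]
    have h3 := P3 i h
    apply le_min
    · linarith
    · linarith
termination_by M.L - M.level i
decreasing_by
  have := M.level_child hk; have := M.level_lt k; omega

theorem pert_down (c : S → ℝ) (V : ℝ → S → ℝ) (hV : M.IsSkiValue c V)
    (γ ε : ℝ) (hε : 0 < ε)
    (P2 : ∀ i : S, c i + M.Vf V γ i < γ → ε ≤ γ - (c i + M.Vf V γ i))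
    (P4 : ∀ i : S, γ < c i + M.Vf V γ i →
      ε * ∑ k ∈ M.child i, M.p k * M.dhi c V γ k ≤ (c i + M.Vf V γ i - γ) + ε)
    (i : S) : V γ i - ε * M.dhi c V γ i ≤ V (γ - ε) i := by
  have hB : 0 ≤ ∑ k ∈ M.child i, M.p k * M.dhi c V γ k :=
    Finset.sum_nonneg fun k hk =>
      mul_nonneg (M.p_pos k).le (M.dhi_nonneg c V γ k)
  have hVf : M.Vf V γ i - ε * (∑ k ∈ M.child i, M.p k * M.dhi c V γ k)
      ≤ M.Vf V (γ - ε) i := by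
    rw [Vf, Vf, Finset.mul_sum, ← Finset.sum_sub_distrib]
    apply Finset.sum_le_sum
    intro k hk
    have ih := pert_down c V hV γ ε hε P2 P4 k
    have hp := (M.p_pos k).le
    nlinarith [mul_le_mul_of_nonneg_left ih hp]
  rw [M.V_eq hV γ i, M.V_eq hV (γ - ε) i, M.dhi_def]
  rcases lt_trichotomy γ (c i + M.Vf V γ i) with h | h | h
  · rw [if_pos h, min_eq_left h.le]
    have h4 := P4 i h
    apply le_min
    · linarith
    · linarith
  · rw [if_neg (by rw [← h]; exact lt_irrefl γ), if_neg (by rw [← h]; exact lt_irrefl γ)]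
    rw [← h, min_self]
    have hm1 : (1:ℝ) ≤ max 1 (∑ k ∈ M.child i, M.p k * M.dhi c V γ k) := le_max_left _ _
    have hm2 : ∑ k ∈ M.child i, M.p k * M.dhi c V γ k
        ≤ max 1 (∑ k ∈ M.child i, M.p k * M.dhi c V γ k) := le_max_right _ _
    apply le_min
    · nlinarith
    · nlinarith
  · rw [if_neg (by linarith), if_pos h, min_eq_right (by linarith)]
    have h2 := P2 i h
    apply le_min
    · nlinarith
    · linarith
termination_by M.L - M.level i
decreasing_by
  have := M.level_child hk; have := M.level_lt k; omega

end TreeMC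

namespace TreeMC

variable {S : Type*} [Fintype S] [DecidableEq S] (M : TreeMC S)

lemma exists_eps (c : S → ℝ) (V : ℝ → S → ℝ) (γ : ℝ) :
    ∃ ε : ℝ, 0 < ε ∧ ∀ ε' : ℝ, 0 < ε' → ε' ≤ ε →
      (∀ i : S, γ < c i + M.Vf V γ i → ε' ≤ c i + M.Vf V γ i - γ) ∧
      (∀ i : S, c i + M.Vf V γ i < γ → ε' ≤ γ - (c i + M.Vf V γ i)) ∧
      (∀ i : S, c i + M.Vf V γ i < γ →
        ε' * ∑ k ∈ M.child i, M.p k * M.dlo c V γ k ≤ (γ - (c i + M.Vf V γ i)) + ε') ∧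
      (∀ i : S, γ < c i + M.Vf V γ i →
        ε' * ∑ k ∈ M.child i, M.p k * M.dhi c V γ k ≤ (c i + M.Vf V γ i - γ) + ε') := by
  classical
  set T : Finset S := Finset.univ.filter fun i => c i + M.Vf V γ i ≠ γ with hT
  set δ : ℝ := if hne : T.Nonempty then T.inf' hne (fun i => |c i + M.Vf V γ i - γ|) else 1
    with hδdef
  have hδ : 0 < δ := by
    rw [hδdef]
    split_ifs with hne
    · rw [Finset.lt_inf'_iff]
      intro b hb
      rw [hT, Finset.mem_filter] at hb
      exact abs_pos.2 (sub_ne_zero.2 hb.2)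
    · norm_num
  have hδle : ∀ i : S, c i + M.Vf V γ i ≠ γ → δ ≤ |c i + M.Vf V γ i - γ| := by
    intro i hi
    have hmem : i ∈ T := by rw [hT, Finset.mem_filter]; exact ⟨Finset.mem_univ i, hi⟩
    rw [hδdef]
    rw [dif_pos ⟨i, hmem⟩]
    exact Finset.inf'_le _ hmem
  set K : ℝ := 1 + ∑ j : S, (M.dlo c V γ j + M.dhi c V γ j) with hKdef
  have hsum_nonneg : 0 ≤ ∑ j : S, (M.dlo c V γ j + M.dhi c V γ j) :=
    Finset.sum_nonneg fun j _ => add_nonneg (M.dlo_nonneg c V γ j) (M.dhi_nonneg c V γ j)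
  have hK1 : 1 ≤ K := by rw [hKdef]; linarith
  have hK0 : 0 < K := by linarith
  have hAK : ∀ i : S, ∑ k ∈ M.child i, M.p k * M.dlo c V γ k ≤ K - 1 := by
    intro i
    have s1 : ∑ k ∈ M.child i, M.p k * M.dlo c V γ k
        ≤ ∑ k ∈ M.child i, (M.dlo c V γ k + M.dhi c V γ k) := by
      apply Finset.sum_le_sum
      intro k _
      have := mul_le_of_le_one_left (M.dlo_nonneg c V γ k) (M.p_le_one k)
      have := M.dhi_nonneg c V γ k
      linarith
    have s2 : ∑ k ∈ M.child i, (M.dlo c V γ k + M.dhi c V γ k)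
        ≤ ∑ j : S, (M.dlo c V γ j + M.dhi c V γ j) :=
      Finset.sum_le_sum_of_subset_of_nonneg (Finset.subset_univ _)
        (fun j _ _ => add_nonneg (M.dlo_nonneg c V γ j) (M.dhi_nonneg c V γ j))
    rw [hKdef]; linarith
  have hBK : ∀ i : S, ∑ k ∈ M.child i, M.p k * M.dhi c V γ k ≤ K - 1 := by
    intro i
    have s1 : ∑ k ∈ M.child i, M.p k * M.dhi c V γ k
        ≤ ∑ k ∈ M.child i, (M.dlo c V γ k + M.dhi c V γ k) := by
      apply Finset.sum_le_sum
      intro k _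
      have := mul_le_of_le_one_left (M.dhi_nonneg c V γ k) (M.p_le_one k)
      have := M.dlo_nonneg c V γ k
      linarith
    have s2 : ∑ k ∈ M.child i, (M.dlo c V γ k + M.dhi c V γ k)
        ≤ ∑ j : S, (M.dlo c V γ j + M.dhi c V γ j) :=
      Finset.sum_le_sum_of_subset_of_nonneg (Finset.subset_univ _)
        (fun j _ _ => add_nonneg (M.dlo_nonneg c V γ j) (M.dhi_nonneg c V γ j))
    rw [hKdef]; linarith
  refine ⟨δ / K, div_pos hδ hK0, ?_⟩
  intro ε' hε'0 hε'
  have hεK : ε' * K ≤ δ := by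
    rw [← le_div_iff₀ hK0] at *
    exact hε'
  have hε'δ : ε' ≤ δ := by nlinarith
  refine ⟨?_, ?_, ?_, ?_⟩
  · intro i hi
    have := hδle i (by intro he; rw [he] at hi; exact lt_irrefl γ hi)
    rw [abs_of_pos (by linarith)] at this
    linarith
  · intro i hi
    have := hδle i (by intro he; rw [he] at hi; exact lt_irrefl γ hi)
    rw [abs_of_neg (by linarith)] at this
    linarith
  · intro i hi
    have hgap := hδle i (by intro he; rw [he] at hi; exact lt_irrefl γ hi)
    rw [abs_of_neg (by linarith)] at hgap
    have hA0 : 0 ≤ ∑ k ∈ M.child i, M.p k * M.dlo c V γ k :=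
      Finset.sum_nonneg fun k _ => mul_nonneg (M.p_pos k).le (M.dlo_nonneg c V γ k)
    have m1 : ε' * ∑ k ∈ M.child i, M.p k * M.dlo c V γ k ≤ ε' * (K - 1) :=
      mul_le_mul_of_nonneg_left (hAK i) hε'0.le
    nlinarith
  · intro i hi
    have hgap := hδle i (by intro he; rw [he] at hi; exact lt_irrefl γ hi)
    rw [abs_of_pos (by linarith)] at hgap
    have m1 : ε' * ∑ k ∈ M.child i, M.p k * M.dhi c V γ k ≤ ε' * (K - 1) :=
      mul_le_mul_of_nonneg_left (hBK i) hε'0.le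
    nlinarith

lemma mu_lower (c : S → ℝ) (V : ℝ → S → ℝ) (hV : M.IsSkiValue c V)
    (lam mu γstar : ℝ) (hlam0 : 0 < lam) (hγ0 : 0 ≤ γstar)
    (hγmin : ∀ γ : ℝ, 0 ≤ γ →
      mu * γstar - lam * V γstar M.r ≤ mu * γ - lam * V γ M.r) :
    lam * M.dlo c V γstar M.r ≤ mu := by
  obtain ⟨ε, hε, hP⟩ := M.exists_eps c V γstar
  obtain ⟨P1, P2, P3, P4⟩ := hP ε hε le_rfl
  have hpert := M.pert_up c V hV γstar ε hε P1 P3 M.r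
  have hmin := hγmin (γstar + ε) (by linarith)
  have h2 : (lam * M.dlo c V γstar M.r) * ε ≤ mu * ε := by
    nlinarith [mul_le_mul_of_nonneg_left hpert hlam0.le]
  exact le_of_mul_le_mul_right h2 hε

lemma mu_upper (c : S → ℝ) (V : ℝ → S → ℝ) (hV : M.IsSkiValue c V)
    (lam mu γstar : ℝ) (hlam0 : 0 < lam) (hγpos : 0 < γstar)
    (hγmin : ∀ γ : ℝ, 0 ≤ γ →
      mu * γstar - lam * V γstar M.r ≤ mu * γ - lam * V γ M.r) :
    mu ≤ lam * M.dhi c V γstar M.r := by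
  obtain ⟨ε, hε, hP⟩ := M.exists_eps c V γstar
  set ε' : ℝ := min ε γstar with hε'def
  have hε'0 : 0 < ε' := lt_min hε hγpos
  obtain ⟨P1, P2, P3, P4⟩ := hP ε' hε'0 (min_le_left _ _)
  have hpert := M.pert_down c V hV γstar ε' hε'0 P2 P4 M.r
  have hmin := hγmin (γstar - ε') (by have := min_le_right ε γstar; linarith)
  have h2 : mu * ε' ≤ (lam * M.dhi c V γstar M.r) * ε' := by
    nlinarith [mul_le_mul_of_nonneg_left hpert hlam0.le]
  exact le_of_mul_le_mul_right h2 hε'0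

end TreeMC

lemma interval_split {α : Type*} [DecidableEq α] (s : Finset α) (a b : α → ℝ) :
    ∀ m : ℝ, (∀ k ∈ s, a k ≤ b k) → ∑ k ∈ s, a k ≤ m → m ≤ ∑ k ∈ s, b k →
    ∃ x : α → ℝ, (∀ k ∈ s, a k ≤ x k ∧ x k ≤ b k) ∧ ∑ k ∈ s, x k = m := by
  induction s using Finset.cons_induction with
  | empty =>
      intro m _ h1 h2
      simp only [Finset.sum_empty] at h1 h2 ⊢
      exact ⟨fun _ => 0, by simp, le_antisymm h1 h2⟩
  | cons k s hk ih =>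
      intro m hab h1 h2
      simp only [Finset.sum_cons] at h1 h2
      have hab' : ∀ j ∈ s, a j ≤ b j := fun j hj => hab j (Finset.mem_cons_of_mem hj)
      have habk : a k ≤ b k := hab k (Finset.mem_cons_self _ _)
      have hsab : ∑ j ∈ s, a j ≤ ∑ j ∈ s, b j := Finset.sum_le_sum hab'
      set x1 : ℝ := max (a k) (min (b k) (m - ∑ j ∈ s, b j)) with hx1
      have hx1a : a k ≤ x1 := le_max_left _ _
      have hx1b : x1 ≤ b k := max_le habk (min_le_left _ _)
      have hge : m - ∑ j ∈ s, b j ≤ b k := by linarith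
      have hx1ge : m - ∑ j ∈ s, b j ≤ x1 :=
        le_trans (le_min hge le_rfl) (le_max_right _ _)
      have hx1le : x1 ≤ m - ∑ j ∈ s, a j := by
        apply max_le
        · linarith
        · exact le_trans (min_le_right _ _) (by linarith)
      obtain ⟨x, hxb, hxs⟩ := ih (m - x1) hab' (by linarith) (by linarith)
      refine ⟨fun j => if j = k then x1 else x j, ?_, ?_⟩
      · intro j hj
        rcases Finset.mem_cons.1 hj with rfl | hj'
        · simp [hx1a, hx1b]
        · have hjk : j ≠ k := fun he => hk (he ▸ hj')
          simpa [hjk] using hxb j hj'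
      · rw [Finset.sum_cons, if_pos rfl]
        have : ∑ j ∈ s, (if j = k then x1 else x j) = ∑ j ∈ s, x j :=
          Finset.sum_congr rfl fun j hj => by
            have : j ≠ k := fun he => hk (he ▸ hj)
            simp [this]
        rw [this, hxs]
        ring

lemma choose_sigma (lt A B m : ℝ) (h0 : 0 ≤ lt) (hAB : A ≤ B)
    (hm1 : lt * min 1 A ≤ m) (hm2 : m ≤ lt * max 1 B) :
    ∃ σ : ℝ, 0 ≤ σ ∧ σ ≤ lt ∧ (lt - σ) * A ≤ m - σ ∧ m - σ ≤ (lt - σ) * B := by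
  rcases le_or_gt (lt * A) m with h1 | h1
  · rcases le_or_gt m (lt * B) with h2 | h2
    · exact ⟨0, le_rfl, h0, by simpa using h1, by simpa using h2⟩
    · have hB1 : B < 1 := by
        by_contra hB
        push_neg at hB
        rw [max_eq_right hB] at hm2
        linarith
      have hmlt : m ≤ lt := by
        rw [max_eq_left hB1.le, mul_one] at hm2
        exact hm2
      refine ⟨(m - lt * B) / (1 - B), div_nonneg (by linarith) (by linarith), ?_, ?_, ?_⟩
      · rw [div_le_iff₀ (by linarith : (0:ℝ) < 1 - B)]
        nlinarith
      · have hσeq : (m - lt * B) / (1 - B) * (1 - B) = m - lt * B :=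
          div_mul_cancel₀ _ (by linarith : (0:ℝ) < 1 - B).ne'
        set σ := (m - lt * B) / (1 - B)
        have hσ0 : 0 ≤ σ := div_nonneg (by linarith) (by linarith)
        have hσle : σ ≤ lt := by
          rw [div_le_iff₀ (by linarith : (0:ℝ) < 1 - B)]
          nlinarith
        have heq : m - σ = (lt - σ) * B := by nlinarith [hσeq]
        nlinarith [mul_le_mul_of_nonneg_left hAB (by linarith : 0 ≤ lt - σ)]
      · have hσeq : (m - lt * B) / (1 - B) * (1 - B) = m - lt * B :=
          div_mul_cancel₀ _ (by linarith : (0:ℝ) < 1 - B).ne'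
        nlinarith [hσeq]
  · have hA1 : 1 < A := by
      by_contra hA
      push_neg at hA
      rw [min_eq_right hA] at hm1
      linarith
    have hmlt : lt ≤ m := by
      rw [min_eq_left hA1.le, mul_one] at hm1
      exact hm1
    have hApos : (0:ℝ) < A - 1 := by linarith
    refine ⟨(lt * A - m) / (A - 1), div_nonneg (by linarith) hApos.le, ?_, ?_, ?_⟩
    · rw [div_le_iff₀ hApos]
      nlinarith
    · have hσeq : (lt * A - m) / (A - 1) * (A - 1) = lt * A - m :=
        div_mul_cancel₀ _ hApos.ne'
      nlinarith [hσeq]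
    · have hσeq : (lt * A - m) / (A - 1) * (A - 1) = lt * A - m :=
        div_mul_cancel₀ _ hApos.ne'
      set σ := (lt * A - m) / (A - 1)
      have hσle : σ ≤ lt := by
        rw [div_le_iff₀ hApos]
        nlinarith
      have heq : m - σ = (lt - σ) * A := by nlinarith [hσeq]
      nlinarith [mul_le_mul_of_nonneg_left hAB (by linarith : 0 ≤ lt - σ)]

namespace TreeMC

variable {S : Type*} [Fintype S] [DecidableEq S] (M : TreeMC S)

lemma subt_child_subset {k i : S} (hk : k ∈ M.child i) : M.subt k ⊆ M.subt i := by
  intro j hj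
  have h1 : k ∈ M.anc j := M.mem_subt.1 hj
  have h2 : i ∈ M.anc k := by
    obtain ⟨-, hpk⟩ := M.mem_child.1 hk
    rw [← hpk]; exact M.pa_mem_anc k
  exact M.mem_subt.2 (M.anc_trans h1 h2)

lemma exists_child_of_mem_subt {j i : S} (hj : j ∈ M.subt i) (hne : j ≠ i) :
    ∃ k ∈ M.child i, j ∈ M.subt k := by
  rw [M.subt_eq i] at hj
  rcases Finset.mem_insert.1 hj with h | h
  · exact absurd h hne
  · simpa using Finset.mem_biUnion.1 h

lemma anc_sum_single {i j : S} (hj : i ∈ M.anc j) (x : ℝ) :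
    ∑ a ∈ M.anc j, (if a = i then x else 0) / M.pi a = x / M.pi i := by
  rw [Finset.sum_eq_single_of_mem i hj]
  · rw [if_pos rfl]
  · intro b _ hb
    rw [if_neg hb, zero_div]

end TreeMC

namespace TreeMC

variable {S : Type*} [Fintype S] [DecidableEq S] (M : TreeMC S)

theorem build (c : S → ℝ) (V : ℝ → S → ℝ) (γ lam : ℝ)
    (i : S) (τ m : ℝ) (hτ0 : 0 ≤ τ) (htl : τ ≤ lam)
    (hm1 : (lam - τ) * M.dlo c V γ i ≤ m) (hm2 : m ≤ (lam - τ) * M.dhi c V γ i) :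
    ∃ ν : S → ℝ,
      (∀ j : S, 0 ≤ ν j) ∧
      (∀ j : S, j ∉ M.subt i → ν j = 0) ∧
      (∑ j ∈ M.subt i, ν j = m * M.pi i) ∧
      (∀ j ∈ M.subt i, τ + ∑ a ∈ M.anc j, ν a / M.pi a ≤ lam) ∧
      (∀ j ∈ M.subt i, γ < c j + M.Vf V γ j →
        τ + ∑ a ∈ M.anc j, ν a / M.pi a = lam) ∧
      (∀ j ∈ M.subt i, c j + M.Vf V γ j < γ → ν j = 0) := by
  have hlt0 : 0 ≤ lam - τ := by linarith
  by_cases hcs : γ < c i + M.Vf V γ i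
  · -- pull everything at i
    have hd : M.dlo c V γ i = 1 := by rw [M.dlo_def, if_pos hcs]
    have hd' : M.dhi c V γ i = 1 := by rw [M.dhi_def, if_pos hcs]
    rw [hd, mul_one] at hm1
    rw [hd', mul_one] at hm2
    have hm : m = lam - τ := le_antisymm hm2 hm1
    refine ⟨fun j => if j = i then (lam - τ) * M.pi i else 0, ?_, ?_, ?_, ?_, ?_, ?_⟩
    · intro j
      simp only []
      split_ifs
      · exact mul_nonneg hlt0 (M.pi_pos i).le
      · exact le_rfl
    · intro j hj
      simp only []
      rw [if_neg]
      rintro rfl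
      exact hj (M.self_mem_subt j)
    · simp only []
      rw [Finset.sum_ite_eq' (M.subt i) i fun _ => (lam - τ) * M.pi i,
        if_pos (M.self_mem_subt i), hm]
    · intro j hj
      simp only []
      rw [M.anc_sum_single (M.mem_subt.1 hj), mul_div_assoc,
        div_self (M.pi_ne_zero i), mul_one]
      linarith
    · intro j hj _
      simp only []
      rw [M.anc_sum_single (M.mem_subt.1 hj), mul_div_assoc,
        div_self (M.pi_ne_zero i), mul_one]
      ring
    · intro j _ hlt
      simp only []
      rw [if_neg]
      rintro rfl
      exact absurd hcs (not_lt.2 hlt.le)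
  · -- recurse on children
    have hcs' : c i + M.Vf V γ i ≤ γ := not_lt.1 hcs
    set A := ∑ k ∈ M.child i, M.p k * M.dlo c V γ k with hA
    set B := ∑ k ∈ M.child i, M.p k * M.dhi c V γ k with hB
    have hAB : A ≤ B := Finset.sum_le_sum fun k _ =>
      mul_le_mul_of_nonneg_left (M.dlo_le_dhi c V γ k) (M.p_pos k).le
    have hσex : ∃ σ : ℝ, 0 ≤ σ ∧ σ ≤ lam - τ ∧ (lam - τ - σ) * A ≤ m - σ ∧
        m - σ ≤ (lam - τ - σ) * B ∧ (c i + M.Vf V γ i < γ → σ = 0) := by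
      rcases lt_or_eq_of_le hcs' with hlt | heq
      · have hd : M.dlo c V γ i = A := by
          rw [M.dlo_def, if_neg hcs, if_pos hlt]
        have hd' : M.dhi c V γ i = B := by
          rw [M.dhi_def, if_neg hcs, if_pos hlt]
        rw [hd] at hm1
        rw [hd'] at hm2
        exact ⟨0, le_rfl, hlt0, by simpa using hm1, by simpa using hm2, fun _ => rfl⟩
      · have hd : M.dlo c V γ i = min 1 A := by
          rw [M.dlo_def, if_neg hcs, if_neg (by rw [heq]; exact lt_irrefl γ)]
        have hd' : M.dhi c V γ i = max 1 B := by
          rw [M.dhi_def, if_neg hcs, if_neg (by rw [heq]; exact lt_irrefl γ)]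
        rw [hd] at hm1
        rw [hd'] at hm2
        obtain ⟨σ, h1, h2, h3, h4⟩ := choose_sigma (lam - τ) A B m hlt0 hAB hm1 hm2
        exact ⟨σ, h1, h2, h3, h4, fun h => absurd heq (ne_of_lt h)⟩
    obtain ⟨σ, hσ0, hσle, hs1, hs2, hσzero⟩ := hσex
    have hτ'0 : 0 ≤ τ + σ := by linarith
    have htl2 : τ + σ ≤ lam := by linarith
    have hlt' : lam - (τ + σ) = lam - τ - σ := by ring
    obtain ⟨x, hxb, hxs⟩ := interval_split (M.child i)
      (fun k => (lam - (τ + σ)) * M.dlo c V γ k * M.p k)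
      (fun k => (lam - (τ + σ)) * M.dhi c V γ k * M.p k)
      (m - σ)
      (fun k _ => by
        have h0 : 0 ≤ lam - (τ + σ) := by linarith
        exact mul_le_mul_of_nonneg_right
          (mul_le_mul_of_nonneg_left (M.dlo_le_dhi c V γ k) h0) (M.p_pos k).le)
      (by
        have e : ∑ k ∈ M.child i, (lam - (τ + σ)) * M.dlo c V γ k * M.p k
            = (lam - τ - σ) * A := by
          rw [hA, Finset.mul_sum]
          exact Finset.sum_congr rfl fun k _ => by rw [hlt']; ring
        rw [e]; exact hs1)
      (by
        have e : ∑ k ∈ M.child i, (lam - (τ + σ)) * M.dhi c V γ k * M.p k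
            = (lam - τ - σ) * B := by
          rw [hB, Finset.mul_sum]
          exact Finset.sum_congr rfl fun k _ => by rw [hlt']; ring
        rw [e]; exact hs2)
    have Hrec : ∀ k ∈ M.child i, ∃ ν : S → ℝ,
        (∀ j : S, 0 ≤ ν j) ∧
        (∀ j : S, j ∉ M.subt k → ν j = 0) ∧
        (∑ j ∈ M.subt k, ν j = (x k / M.p k) * M.pi k) ∧
        (∀ j ∈ M.subt k, (τ + σ) + ∑ a ∈ M.anc j, ν a / M.pi a ≤ lam) ∧
        (∀ j ∈ M.subt k, γ < c j + M.Vf V γ j →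
          (τ + σ) + ∑ a ∈ M.anc j, ν a / M.pi a = lam) ∧
        (∀ j ∈ M.subt k, c j + M.Vf V γ j < γ → ν j = 0) := by
      intro k hk
      apply build c V γ lam k (τ + σ) (x k / M.p k) hτ'0 htl2
      · rw [le_div_iff₀ (M.p_pos k)]
        exact (hxb k hk).1
      · rw [div_le_iff₀ (M.p_pos k)]
        exact (hxb k hk).2
    choose! f hf1 hf2 hf3 hf4 hf5 hf6 using Hrec
    refine ⟨fun j => (if j = i then σ * M.pi i else 0) + ∑ k ∈ M.child i, f k j,
      ?_, ?_, ?_, ?_, ?_, ?_⟩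
    · intro j
      simp only []
      apply add_nonneg
      · split_ifs
        · exact mul_nonneg hσ0 (M.pi_pos i).le
        · exact le_rfl
      · exact Finset.sum_nonneg fun k hk => hf1 k hk j
    · intro j hj
      simp only []
      have h1 : (if j = i then σ * M.pi i else 0) = 0 := by
        rw [if_neg]
        rintro rfl
        exact hj (M.self_mem_subt j)
      have h2 : ∑ k ∈ M.child i, f k j = 0 := by
        apply Finset.sum_eq_zero
        intro k hk
        apply hf2 k hk
        intro hjk
        exact hj (M.subt_child_subset hk hjk)
      rw [h1, h2, add_zero]
    · simp only []
      rw [Finset.sum_add_distrib,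
        Finset.sum_ite_eq' (M.subt i) i fun _ => σ * M.pi i, if_pos (M.self_mem_subt i)]
      have h2 : ∑ j ∈ M.subt i, ∑ k ∈ M.child i, f k j = (m - σ) * M.pi i := by
        rw [Finset.sum_comm]
        have e1 : ∀ k ∈ M.child i, ∑ j ∈ M.subt i, f k j = x k * M.pi i := by
          intro k hk
          rw [← Finset.sum_subset (M.subt_child_subset hk)
            (fun j _ hnj => hf2 k hk j hnj), hf3 k hk, M.pi_child hk]
          have hp := (M.p_pos k).ne'
          field_simp
        rw [Finset.sum_congr rfl e1, ← Finset.sum_mul, hxs]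
      rw [h2]
      ring
    · intro j hj
      simp only []
      have hkey : (∑ a ∈ M.anc j,
            ((if a = i then σ * M.pi i else 0) + ∑ k ∈ M.child i, f k a) / M.pi a)
          = σ + ∑ k ∈ M.child i, ∑ a ∈ M.anc j, f k a / M.pi a := by
        have e1 : ∀ a : S,
            ((if a = i then σ * M.pi i else 0) + ∑ k ∈ M.child i, f k a) / M.pi a
            = (if a = i then σ * M.pi i else 0) / M.pi a
              + ∑ k ∈ M.child i, f k a / M.pi a := by
          intro a
          rw [add_div, Finset.sum_div]
        rw [Finset.sum_congr rfl fun a _ => e1 a, Finset.sum_add_distrib,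
          M.anc_sum_single (M.mem_subt.1 hj), mul_div_assoc, div_self (M.pi_ne_zero i),
          mul_one, Finset.sum_comm]
      rw [hkey]
      rcases eq_or_ne j i with rfl | hne
      · have hzero : ∀ k ∈ M.child j, ∑ a ∈ M.anc j, f k a / M.pi a = 0 := by
          intro k hk
          apply Finset.sum_eq_zero
          intro a ha
          rw [hf2 k hk a, zero_div]
          intro hak
          have h2 : k ∈ M.anc j := M.anc_trans ha (M.mem_subt.1 hak)
          have := M.anc_level_le h2
          have := M.level_child hk
          omega
        rw [Finset.sum_eq_zero hzero]
        linarith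
      · obtain ⟨k₀, hk₀, hjk₀⟩ := M.exists_child_of_mem_subt hj hne
        have hsing : ∑ k ∈ M.child i, ∑ a ∈ M.anc j, f k a / M.pi a
            = ∑ a ∈ M.anc j, f k₀ a / M.pi a := by
          apply Finset.sum_eq_single_of_mem k₀ hk₀
          intro k hk hne'
          apply Finset.sum_eq_zero
          intro a ha
          rw [hf2 k hk a, zero_div]
          intro hak
          have h1 : k ∈ M.anc j := M.anc_trans ha (M.mem_subt.1 hak)
          have hjk : j ∈ M.subt k := M.mem_subt.2 h1
          exact absurd hjk₀ (Finset.disjoint_left.1 (M.subt_disjoint hk hk₀ hne') hjk)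
        rw [hsing]
        have := hf4 k₀ hk₀ j hjk₀
        linarith
    · intro j hj hgt
      simp only []
      have hkey : (∑ a ∈ M.anc j,
            ((if a = i then σ * M.pi i else 0) + ∑ k ∈ M.child i, f k a) / M.pi a)
          = σ + ∑ k ∈ M.child i, ∑ a ∈ M.anc j, f k a / M.pi a := by
        have e1 : ∀ a : S,
            ((if a = i then σ * M.pi i else 0) + ∑ k ∈ M.child i, f k a) / M.pi a
            = (if a = i then σ * M.pi i else 0) / M.pi a
              + ∑ k ∈ M.child i, f k a / M.pi a := by
          intro a
          rw [add_div, Finset.sum_div]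
        rw [Finset.sum_congr rfl fun a _ => e1 a, Finset.sum_add_distrib,
          M.anc_sum_single (M.mem_subt.1 hj), mul_div_assoc, div_self (M.pi_ne_zero i),
          mul_one, Finset.sum_comm]
      rw [hkey]
      rcases eq_or_ne j i with rfl | hne
      · have hzero : ∀ k ∈ M.child j, ∑ a ∈ M.anc j, f k a / M.pi a = 0 := by
          intro k hk
          apply Finset.sum_eq_zero
          intro a ha
          rw [hf2 k hk a, zero_div]
          intro hak
          have h2 : k ∈ M.anc j := M.anc_trans ha (M.mem_subt.1 hak)
          have := M.anc_level_le h2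
          have := M.level_child hk
          omega
        exact absurd hgt hcs
      · obtain ⟨k₀, hk₀, hjk₀⟩ := M.exists_child_of_mem_subt hj hne
        have hsing : ∑ k ∈ M.child i, ∑ a ∈ M.anc j, f k a / M.pi a
            = ∑ a ∈ M.anc j, f k₀ a / M.pi a := by
          apply Finset.sum_eq_single_of_mem k₀ hk₀
          intro k hk hne'
          apply Finset.sum_eq_zero
          intro a ha
          rw [hf2 k hk a, zero_div]
          intro hak
          have h1 : k ∈ M.anc j := M.anc_trans ha (M.mem_subt.1 hak)
          have hjk : j ∈ M.subt k := M.mem_subt.2 h1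
          exact absurd hjk₀ (Finset.disjoint_left.1 (M.subt_disjoint hk hk₀ hne') hjk)
        rw [hsing]
        have := hf5 k₀ hk₀ j hjk₀ hgt
        linarith
    · intro j hj hlt
      simp only []
      have h1 : (if j = i then σ * M.pi i else 0) = 0 := by
        split_ifs with h
        · subst h
          rw [hσzero hlt]
          ring
        · rfl
      have h2 : ∑ k ∈ M.child i, f k j = 0 := by
        apply Finset.sum_eq_zero
        intro k hk
        by_cases hjk : j ∈ M.subt k
        · exact hf6 k hk j hjk hlt
        · exact hf2 k hk j hjk
      rw [h1, h2, add_zero]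
termination_by M.L - M.level i
decreasing_by
  have := M.level_child hk; have := M.level_lt k; omega

end TreeMC

/-- Complementary slackness. Let `γ*` minimize `γ ↦ μ·γ − λ·V(γ, r)` over
`γ ≥ 0` and, for `ν`, define `q_i(ν) = λ·π(i) − Σ_{a ∈ anc(i), a ≠ i} ν_a·π(i)/π(a)`.
A vector `ν` feasible for SimplerFluid is optimal for SimplerFluid iff
(C-1) `Σ_i ν_i = μ` whenever `γ* > 0`;
(C-2) `ν_i = q_i(ν)` for every `i` with `c(i) + V^f(γ*, i) > γ*`;
(C-3) `ν_i = 0` for every `i` with `c(i) + V^f(γ*, i) < γ*`. -/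
theorem simplerFluid_opt_iff_comp_slack {S : Type*} [Fintype S] [DecidableEq S]
    (M : TreeMC S) (c : S → ℝ) (hc : ∀ i, 0 < c i)
    (V : ℝ → S → ℝ) (hV : M.IsSkiValue c V)
    (lam mu : ℝ) (hlam0 : 0 < lam) (hlam1 : lam < 1) (hmu0 : 0 < mu) (hmu1 : mu ≤ 1)
    (γstar : ℝ) (hγ0 : 0 ≤ γstar)
    (hγmin : ∀ γ : ℝ, 0 ≤ γ →
      mu * γstar - lam * V γstar M.r ≤ mu * γ - lam * V γ M.r)
    (ν : S → ℝ) (hν : M.SimpFeasible lam mu ν) :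
    (∀ ν' : S → ℝ, M.SimpFeasible lam mu ν' →
        ∑ a : S, ν' a * M.cf c a ≤ ∑ a : S, ν a * M.cf c a) ↔
      ((0 < γstar → ∑ i : S, ν i = mu) ∧
        (∀ i : S, γstar < c i + M.Vf V γstar i →
          ν i = lam * M.pi i - ∑ a ∈ (M.anc i).erase i, ν a * M.pi i / M.pi a) ∧
        (∀ i : S, c i + M.Vf V γstar i < γstar → ν i = 0)) := by
  have hmlow : lam * M.dlo c V γstar M.r ≤ mu :=
    M.mu_lower c V hV lam mu γstar hlam0 hγ0 hγmin
  have hdd : M.dlo c V γstar M.r ≤ M.dhi c V γstar M.r := M.dlo_le_dhi c V γstar M.r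
  obtain ⟨m, hm1, hm2, hmmu, hmeq⟩ :
      ∃ m : ℝ, lam * M.dlo c V γstar M.r ≤ m ∧ m ≤ lam * M.dhi c V γstar M.r ∧
        m ≤ mu ∧ (0 < γstar → m = mu) := by
    rcases hγ0.eq_or_lt with hγeq | hγpos
    · exact ⟨min mu (lam * M.dhi c V γstar M.r),
        le_min hmlow (mul_le_mul_of_nonneg_left hdd hlam0.le), min_le_right _ _,
        min_le_left _ _, fun h => absurd hγeq (ne_of_lt h)⟩
    · exact ⟨mu, hmlow, M.mu_upper c V hV lam mu γstar hlam0 hγpos hγmin, le_rfl,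
        fun _ => rfl⟩
  obtain ⟨ν', h1, h2, h3, h4, h5, h6⟩ :=
    M.build c V γstar lam M.r 0 m le_rfl hlam0.le
      (by rw [sub_zero]; exact hm1) (by rw [sub_zero]; exact hm2)
  have hmemr : ∀ i : S, i ∈ M.subt M.r := by
    intro i; rw [M.subt_root]; exact Finset.mem_univ i
  have hsum : ∑ i : S, ν' i = m := by
    have h := h3
    rw [M.subt_root, M.pi_root, mul_one] at h
    exact h
  have hconv : ∀ i : S, ∑ a ∈ M.anc i, ν' a * M.pi i / M.pi a
      = M.pi i * ∑ a ∈ M.anc i, ν' a / M.pi a := by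
    intro i
    rw [Finset.mul_sum]
    exact Finset.sum_congr rfl fun a _ => by ring
  have hν'feas : M.SimpFeasible lam mu ν' := by
    refine ⟨h1, ?_, ?_⟩
    · intro i
      have hT := h4 i (hmemr i)
      have hpi := M.pi_pos i
      rw [hconv i]
      nlinarith
    · rw [hsum]; exact hmmu
  have hν'val : ∑ a : S, ν' a * M.cf c a
      = mu * γstar + lam * ∑ j : S, M.betaStar c V γstar j * M.pi j := by
    apply (M.opt_char c V hV lam mu γstar hγ0 ν' hν'feas).2
    refine ⟨?_, ?_, ?_⟩
    · intro hγpos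
      rw [hsum]; exact hmeq hγpos
    · intro i hi
      have hT := h5 i (hmemr i) hi
      have hT' : ∑ a ∈ M.anc i, ν' a / M.pi a = lam := by linarith
      rw [hconv i, hT']
      ring
    · intro i hi
      exact h6 i (hmemr i) hi
  constructor
  · intro hopt
    have hle := M.weak_duality c V hV lam mu γstar hγ0 ν hν
    have hge := hopt ν' hν'feas
    have hval : ∑ a : S, ν a * M.cf c a
        = mu * γstar + lam * ∑ j : S, M.betaStar c V γstar j * M.pi j :=
      le_antisymm hle (hν'val ▸ hge)
    obtain ⟨C1, C2, C3⟩ := (M.opt_char c V hV lam mu γstar hγ0 ν hν).1 hval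
    exact ⟨C1, fun i hi => (M.erase_form lam ν i).1 (C2 i hi), C3⟩
  · rintro ⟨C1, C2, C3⟩
    have hval := (M.opt_char c V hV lam mu γstar hγ0 ν hν).2
      ⟨C1, fun i hi => (M.erase_form lam ν i).2 (C2 i hi), C3⟩
    intro ν'' hfeas
    calc ∑ a : S, ν'' a * M.cf c a
        ≤ mu * γstar + lam * ∑ j : S, M.betaStar c V γstar j * M.pi j :=
          M.weak_duality c V hV lam mu γstar hγ0 ν'' hfeas
      _ = ∑ a : S, ν a * M.cf c a := hval.symm
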